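/- For any move x → x' from an exceptional position x in NIM(k+1,k), B(x) = B(x') = m(x) − 1, which is odd. -/

import Mathlib

/-- `z` is a basic position with parameter `b`: coordinate sum `k*b`, all coordinates
at most `b`, all coordinates even if `b` is even, exactly one even if `b` is odd. -/
def IsBasic (k : ℕ) (z : Fin (k+1) → ℕ) (b : ℕ) : Prop :=
  (∑ i, z i) = k * b ∧ (∀ i, z i ≤ b) ∧
    (Even b → ∀ i, Even (z i)) ∧ (Odd b → ∃! i, Even (z i))

/-- `Pre k y x` means `y ⪯ x`: the sorted vector of `y` is componentwise ≤ that of `x`. -/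
def Pre (k : ℕ) (y x : Fin (k+1) → ℕ) : Prop :=
  ∀ i, (y ∘ Tuple.sort y) i ≤ (x ∘ Tuple.sort x) i

/-- `BVal k x = max { b : some basic z with parameter b satisfies z ⪯ x }`. -/
noncomputable def BVal (k : ℕ) (x : Fin (k+1) → ℕ) : ℕ :=
  sSup {b | ∃ z, IsBasic k z b ∧ Pre k z x}

/-- A move in NIM(k+1,k): keep coordinate `i`, decrease every other (positive) coordinate by 1. -/
def MoveK (k : ℕ) (x y : Fin (k+1) → ℕ) : Prop :=
  ∃ i, (∀ j, j ≠ i → 0 < x j) ∧ ∀ j, y j = if j = i then x j else x j - 1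

/-- The M-move: keep a smallest even coordinate if one exists, otherwise keep a
largest coordinate; decrease the other k (positive) coordinates by 1. -/
def MMove (k : ℕ) (x y : Fin (k+1) → ℕ) : Prop :=
  ∃ i, (∀ j, j ≠ i → 0 < x j) ∧
    ((∃ j, Even (x j)) → Even (x i) ∧ ∀ j, Even (x j) → x i ≤ x j) ∧
    ((∀ j, Odd (x j)) → ∀ j, x j ≤ x i) ∧
    (∀ j, y j = if j = i then x j else x j - 1)

/-- Exceptional position: all coordinates odd, all `< m`, and `|x| = k*m + k - 1`
for some even `m`. -/
def Exceptional (k : ℕ) (x : Fin (k+1) → ℕ) : Prop :=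
  ∃ m, Even m ∧ (∀ i, Odd (x i)) ∧ (∀ i, x i < m) ∧ (∑ i, x i) = k * m + k - 1

/-- `MVal k x m`: playing the M-rule from `x`, the game ends after exactly `m` moves. -/
inductive MVal (k : ℕ) : (Fin (k+1) → ℕ) → ℕ → Prop
  | zero (x) : (¬ ∃ y, MoveK k x y) → MVal k x 0
  | succ (x y m) : MMove k x y → MVal k y m → MVal k x (m + 1)

/- ======================= auxiliary lemmas ======================= -/

lemma sum_sorted {n : ℕ} (f : Fin n → ℕ) : ∑ i, (f ∘ Tuple.sort f) i = ∑ i, f i := by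
  simpa using Equiv.sum_comp (Tuple.sort f) f

lemma sorted_le_of_le_monotone {n : ℕ} {z w : Fin n → ℕ} (hw : Monotone w)
    (hzw : ∀ i, z i ≤ w i) (i : Fin n) : (z ∘ Tuple.sort z) i ≤ w i := by
  obtain ⟨j, hij, hji⟩ : ∃ j, i ≤ j ∧ (Tuple.sort z) j ≤ i := by
    by_contra hc
    push_neg at hc
    have hmaps : ∀ a ∈ Finset.Ici i, (Tuple.sort z) a ∈ Finset.Ioi i := by
      intro a ha
      exact Finset.mem_Ioi.2 (hc a (Finset.mem_Ici.1 ha))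
    have hcard := Finset.card_le_card_of_injOn _ hmaps ((Tuple.sort z).injective.injOn)
    rw [Fin.card_Ici, Fin.card_Ioi] at hcard
    have := i.isLt
    omega
  calc (z ∘ Tuple.sort z) i ≤ (z ∘ Tuple.sort z) j := Tuple.monotone_sort z hij
    _ = z ((Tuple.sort z) j) := rfl
    _ ≤ w ((Tuple.sort z) j) := hzw _
    _ ≤ w i := hw hji

lemma pre_of_le {k : ℕ} {z y : Fin (k+1) → ℕ} (h : ∀ i, z i ≤ y i) : Pre k z y := by
  intro i
  have h2 : ∀ j, (z ∘ Tuple.sort y) j ≤ (y ∘ Tuple.sort y) j := fun j => h _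
  have h3 := sorted_le_of_le_monotone (Tuple.monotone_sort y) h2 i
  rwa [Tuple.comp_perm_comp_sort_eq_comp_sort] at h3

lemma exists_le_sum : ∀ (n : ℕ) (f : Fin n → ℕ) (T : ℕ), T ≤ ∑ i, f i →
    ∃ g : Fin n → ℕ, (∀ i, g i ≤ f i) ∧ ∑ i, g i = T := by
  intro n
  induction n with
  | zero => intro f T h; simp at h; exact ⟨fun _ => 0, fun i => Nat.zero_le _, by simp [h]⟩
  | succ n ih =>
    intro f T h
    rw [Fin.sum_univ_succ] at h
    obtain ⟨g, hg1, hg2⟩ := ih (fun i => f i.succ) (T - min (f 0) T)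
      (by show T - min (f 0) T ≤ ∑ i : Fin n, f i.succ; omega)
    refine ⟨Fin.cons (min (f 0) T) g, ?_, ?_⟩
    · intro i
      refine Fin.cases ?_ ?_ i
      · simpa using min_le_left _ _
      · intro j; simpa using hg1 j
    · rw [Fin.sum_univ_succ]
      simp only [Fin.cons_zero, Fin.cons_succ]
      rw [hg2]
      omega

lemma sum_le_of_pre {k : ℕ} {z y : Fin (k+1) → ℕ} (h : Pre k z y) :
    ∑ i, z i ≤ ∑ i, y i := by
  calc ∑ i, z i = ∑ i, (z ∘ Tuple.sort z) i := (sum_sorted z).symm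
    _ ≤ ∑ i, (y ∘ Tuple.sort y) i := Finset.sum_le_sum fun i _ => h i
    _ = ∑ i, y i := sum_sorted y

/-- At most one coordinate of an exceptional `x` equals 1. -/
lemma one_coord_unique {k : ℕ} (hk : 2 ≤ k) {x : Fin (k+1) → ℕ} {m : ℕ}
    (hlt : ∀ i, x i < m) (hsum : (∑ i, x i) = k * m + k - 1)
    {a b : Fin (k+1)} (ha : x a = 1) (hb : x b = 1) : a = b := by
  by_contra hab
  have hbmem : b ∈ (Finset.univ.erase a) := Finset.mem_erase.2 ⟨fun e => hab e.symm, Finset.mem_univ b⟩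
  have h1 : x a + ∑ j ∈ Finset.univ.erase a, x j = ∑ j, x j :=
    Finset.add_sum_erase _ _ (Finset.mem_univ a)
  have h2 : x b + ∑ j ∈ (Finset.univ.erase a).erase b, x j = ∑ j ∈ Finset.univ.erase a, x j :=
    Finset.add_sum_erase _ _ hbmem
  have hcard : ((Finset.univ.erase a).erase b).card = k - 1 := by
    rw [Finset.card_erase_of_mem hbmem, Finset.card_erase_of_mem (Finset.mem_univ a)]
    simp
  have hub : ∑ j ∈ (Finset.univ.erase a).erase b, x j ≤ (k-1) * (m-1) := by
    calc ∑ j ∈ (Finset.univ.erase a).erase b, x j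
        ≤ ∑ _j ∈ (Finset.univ.erase a).erase b, (m-1) :=
          Finset.sum_le_sum (fun j _ => by have := hlt j; omega)
      _ = (k-1) * (m-1) := by rw [Finset.sum_const, hcard, smul_eq_mul]
  obtain ⟨p, rfl⟩ : ∃ p, k = p + 1 := ⟨k - 1, by omega⟩
  have hm1 : 1 ≤ m := by have := hlt a; omega
  obtain ⟨q, rfl⟩ : ∃ q, m = q + 1 := ⟨m - 1, by omega⟩
  simp only [Nat.add_sub_cancel] at hcard hub
  have hexp : (p+1) * (q+1) = p * q + p + q + 1 := by ring
  omega

/-- Upper bound: any b in the BVal-set of a position dominated coordinatewise-sortedly. -/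
lemma bval_mem_le {k : ℕ} (hk : 2 ≤ k) {x : Fin (k+1) → ℕ} {m : ℕ} (hm : Even m)
    (hodd : ∀ i, Odd (x i)) (hlt : ∀ i, x i < m) (hsum : (∑ i, x i) = k * m + k - 1)
    {b : ℕ} (hb : ∃ z, IsBasic k z b ∧ Pre k z x) : b ≤ m - 1 := by
  obtain ⟨z, ⟨hzsum, _hzle, hzev, _⟩, hpre⟩ := hb
  have hm2 : 2 ≤ m := by
    have h1 := (hodd 0).pos
    have := hlt 0
    omega
  have hsle : k * b ≤ k * m + k - 1 := by
    rw [← hzsum, ← hsum]; exact sum_le_of_pre hpre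
  have hble : b ≤ m := by
    by_contra hc
    have : k * (m + 1) ≤ k * b := Nat.mul_le_mul_left k (by omega)
    have hexp : k * (m+1) = k * m + k := by ring
    omega
  have hbne : b ≠ m := by
    intro rfl_eq
    subst rfl_eq
    have hzall : ∀ i, Even (z i) := hzev hm
    have hstrict : ∀ i, (z ∘ Tuple.sort z) i + 1 ≤ (x ∘ Tuple.sort x) i := by
      intro i
      refine Nat.lt_of_le_of_ne (hpre i) ?_
      intro heq
      have hev : Even ((z ∘ Tuple.sort z) i) := hzall _
      have hod : Odd ((x ∘ Tuple.sort x) i) := hodd _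
      rw [heq] at hev
      exact (Nat.not_odd_iff_even.2 hev) hod
    have hsum2 : (∑ i, (z ∘ Tuple.sort z) i) + (k+1) ≤ ∑ i, (x ∘ Tuple.sort x) i := by
      calc (∑ i, (z ∘ Tuple.sort z) i) + (k+1)
          = ∑ i, ((z ∘ Tuple.sort z) i + 1) := by
            rw [Finset.sum_add_distrib, Finset.sum_const, Finset.card_univ, Fintype.card_fin,
              smul_eq_mul, mul_one]
        _ ≤ ∑ i, (x ∘ Tuple.sort x) i := Finset.sum_le_sum fun i _ => hstrict i
    rw [sum_sorted, sum_sorted, hzsum, hsum] at hsum2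
    omega
  omega

theorem stmt13 (k : ℕ) (hk : 2 ≤ k) (x x' : Fin (k+1) → ℕ) (m : ℕ)
    (hm : Even m) (hodd : ∀ i, Odd (x i)) (hlt : ∀ i, x i < m)
    (hsum : (∑ i, x i) = k * m + k - 1) (h : MoveK k x x') :
    BVal k x = m - 1 ∧ BVal k x' = m - 1 ∧ Odd (m - 1) := by
  obtain ⟨i, hpos, hx'⟩ := h
  have hm2 : 2 ≤ m := by
    have h1 := (hodd 0).pos
    have := hlt 0
    omega
  have hoddm1 : Odd (m - 1) := by
    obtain ⟨t, ht⟩ := hm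
    exact ⟨t - 1, by omega⟩
  have hEm1 : ¬ Even (m - 1) := by
    rw [Nat.even_iff]; rw [Nat.odd_iff] at hoddm1; omega
  have hkm : k * m = k * (m - 1) + k := by
    have h1 : m - 1 + 1 = m := by omega
    calc k * m = k * ((m-1) + 1) := by rw [h1]
      _ = k * (m-1) + k := by ring
  have hkm2 : 2 * k ≤ k * m := by
    calc 2 * k = k * 2 := by ring
      _ ≤ k * m := Nat.mul_le_mul_left k hm2
  have hxpos : ∀ j, 1 ≤ x j := fun j => (hodd j).pos
  -- ∑ x' = k*m - 1
  have hsum' : (∑ j, x' j) + k = k * m - 1 + k := by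
    have hpt : ∀ j, x' j + (if j = i then 0 else 1) = x j := by
      intro j
      rw [hx' j]
      by_cases hj : j = i
      · simp [hj]
      · rw [if_neg hj, if_neg hj]
        have := hxpos j
        omega
    have hs : (∑ j, x' j) + (∑ j, (if j = i then (0:ℕ) else 1)) = ∑ j, x j := by
      rw [← Finset.sum_add_distrib]
      exact Finset.sum_congr rfl fun j _ => hpt j
    have hind : (∑ j, (if j = i then (0:ℕ) else 1)) = k := by
      have h1 : ∀ j : Fin (k+1), (if j = i then (0:ℕ) else 1) + (if j = i then (1:ℕ) else 0) = 1 := by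
        intro j; by_cases hj : j = i <;> simp [hj]
      have h2 : (∑ j, ((if j = i then (0:ℕ) else 1) + (if j = i then (1:ℕ) else 0))) = k + 1 := by
        rw [Finset.sum_congr rfl fun j _ => h1 j]
        simp [Finset.card_univ]
      rw [Finset.sum_add_distrib, Fintype.sum_ite_eq'] at h2
      omega
    rw [hind, hsum] at hs
    omega
  -- membership for x
  have hmemx : (m - 1) ∈ {b | ∃ z, IsBasic k z b ∧ Pre k z x} := by
    have hxa : ∀ j, x j = 2 * ((x j - 1)/2) + 1 := by
      intro j; obtain ⟨c, hc⟩ := hodd j; omega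
    have hsa : k - 1 ≤ ∑ j, (x j - 1)/2 := by
      have h2 : ∑ j, x j = ∑ j, (2 * ((x j - 1)/2) + 1) :=
        Finset.sum_congr rfl fun j _ => hxa j
      rw [Finset.sum_add_distrib, Finset.sum_const, Finset.card_univ, Fintype.card_fin,
        smul_eq_mul, mul_one, ← Finset.mul_sum, hsum] at h2
      omega
    obtain ⟨t, ht1, ht2⟩ := exists_le_sum (k+1) (fun j => (x j - 1)/2) (k-1) hsa
    have ht1' : ∀ j, t j ≤ (x j - 1)/2 := fun j => ht1 j
    refine ⟨fun j => x j - ((if j = 0 then 1 else 0) + 2 * t j), ⟨?_, ?_, ?_, ?_⟩, ?_⟩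
    · show (∑ j, (x j - ((if j = 0 then 1 else 0) + 2 * t j))) = k * (m - 1)
      have hpt : ∀ j : Fin (k+1), (x j - ((if j = 0 then 1 else 0) + 2 * t j))
          + ((if j = (0 : Fin (k+1)) then (1:ℕ) else 0) + 2 * t j) = x j := by
        intro j
        have h1 := hxa j
        have h2 := ht1' j
        by_cases hj : j = 0
        · rw [if_pos hj]; omega
        · rw [if_neg hj]; omega
      have hs : (∑ j, (x j - ((if j = 0 then 1 else 0) + 2 * t j)))
          + ((∑ j, (if j = (0 : Fin (k+1)) then (1:ℕ) else 0)) + 2 * ∑ j, t j) = ∑ j, x j := by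
        rw [Finset.mul_sum, ← Finset.sum_add_distrib, ← Finset.sum_add_distrib]
        exact Finset.sum_congr rfl fun j _ => hpt j
      have ht2' : (∑ j, t j) = k - 1 := ht2
      rw [Fintype.sum_ite_eq', ht2', hsum] at hs
      omega
    · intro j
      show x j - ((if j = 0 then 1 else 0) + 2 * t j) ≤ m - 1
      have := hlt j
      omega
    · intro hev; exact absurd hev hEm1
    · intro _
      refine ⟨0, ?_, ?_⟩
      · show Even (x 0 - ((if (0 : Fin (k+1)) = 0 then 1 else 0) + 2 * t 0))
        rw [if_pos rfl, Nat.even_iff]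
        have h1 := hxa 0
        have h2 := ht1' 0
        omega
      · intro j hj
        have hj' : Even (x j - ((if j = 0 then 1 else 0) + 2 * t j)) := hj
        by_contra hne
        rw [if_neg hne, Nat.even_iff] at hj'
        have h1 := hxa j
        have h2 := ht1' j
        omega
    · exact pre_of_le fun j => Nat.sub_le _ _
  have hubx : ∀ b ∈ {b | ∃ z, IsBasic k z b ∧ Pre k z x}, b ≤ m - 1 :=
    fun b hb => bval_mem_le hk hm hodd hlt hsum hb
  -- upper bound for x'
  have hub' : ∀ b ∈ {b | ∃ z, IsBasic k z b ∧ Pre k z x'}, b ≤ m - 1 := by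
    intro b hb
    obtain ⟨z, ⟨hzsum, _, _, _⟩, hpre⟩ := hb
    have hsle : k * b ≤ k * m - 1 := by
      rw [← hzsum]
      have h1 := sum_le_of_pre hpre
      omega
    by_contra hc
    have h2 : k * m ≤ k * b := Nat.mul_le_mul_left k (by omega)
    omega
  -- membership for x'
  have hmem' : (m - 1) ∈ {b | ∃ z, IsBasic k z b ∧ Pre k z x'} := by
    obtain ⟨j0, hj0i, hj0pos⟩ : ∃ j0, j0 ≠ i ∧ ∀ j, j ≠ i → j ≠ j0 → 0 < x' j := by
      by_cases hz : ∃ j, j ≠ i ∧ x' j = 0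
      · obtain ⟨j0, hj0i, hj00⟩ := hz
        refine ⟨j0, hj0i, fun j hji hjj0 => ?_⟩
        by_contra hc
        have hxj : x j = 1 := by
          have h5 := hx' j; rw [if_neg hji] at h5
          have := hxpos j
          omega
        have hxj0 : x j0 = 1 := by
          have h5 := hx' j0; rw [if_neg hj0i] at h5
          have := hxpos j0
          omega
        exact hjj0 (one_coord_unique hk hlt hsum hxj hxj0)
      · push_neg at hz
        by_cases hi : i = (⟨0, by omega⟩ : Fin (k+1))
        · refine ⟨⟨1, by omega⟩, ?_, fun j hji _ => Nat.pos_of_ne_zero (hz j hji)⟩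
          rw [hi]
          simp [Fin.ext_iff]
        · exact ⟨⟨0, by omega⟩, fun hc => hi hc.symm,
            fun j hji _ => Nat.pos_of_ne_zero (hz j hji)⟩
    have hij0 : i ≠ j0 := fun hc => hj0i hc.symm
    have hx'i : x' i = x i := by rw [hx' i, if_pos rfl]
    have hx'ev : ∀ j, j ≠ i → x' j % 2 = 0 := by
      intro j hj
      rw [hx' j, if_neg hj]
      have h5 := hodd j
      rw [Nat.odd_iff] at h5
      have := hxpos j
      omega
    refine ⟨fun j => if j = i ∨ j = j0 then x' j else x' j - 1, ⟨?_, ?_, ?_, ?_⟩, ?_⟩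
    · show (∑ j, (if j = i ∨ j = j0 then x' j else x' j - 1)) = k * (m - 1)
      have hpt : ∀ j : Fin (k+1), (if j = i ∨ j = j0 then x' j else x' j - 1)
          + (if j = i ∨ j = j0 then (0:ℕ) else 1) = x' j := by
        intro j
        by_cases hor : j = i ∨ j = j0
        · rw [if_pos hor, if_pos hor]; omega
        · push_neg at hor
          have hp := hj0pos j hor.1 hor.2
          have hor' : ¬ (j = i ∨ j = j0) := by tauto
          rw [if_neg hor', if_neg hor']
          omega
      have hs : (∑ j, (if j = i ∨ j = j0 then x' j else x' j - 1))
          + (∑ j, (if j = i ∨ j = j0 then (0:ℕ) else 1)) = ∑ j, x' j := by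
        rw [← Finset.sum_add_distrib]
        exact Finset.sum_congr rfl fun j _ => hpt j
      have hindle : (∑ j, (if j = i ∨ j = j0 then (0:ℕ) else 1)) = k - 1 := by
        have h1 : ∀ j : Fin (k+1), (if j = i then (1:ℕ) else 0) + (if j = j0 then (1:ℕ) else 0)
            + (if j = i ∨ j = j0 then (0:ℕ) else 1) = 1 := by
          intro j
          by_cases h1 : j = i
          · have h2 : j ≠ j0 := by rw [h1]; exact hij0
            have hor : j = i ∨ j = j0 := Or.inl h1
            rw [if_pos h1, if_neg h2, if_pos hor]
          · by_cases h2 : j = j0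
            · have hor : j = i ∨ j = j0 := Or.inr h2
              rw [if_neg h1, if_pos h2, if_pos hor]
            · have hor : ¬ (j = i ∨ j = j0) := by tauto
              rw [if_neg h1, if_neg h2, if_neg hor]
        have h2 : (∑ j, ((if j = i then (1:ℕ) else 0) + (if j = j0 then (1:ℕ) else 0)
            + (if j = i ∨ j = j0 then (0:ℕ) else 1))) = k + 1 := by
          rw [Finset.sum_congr rfl fun j _ => h1 j]
          simp [Finset.card_univ]
        rw [Finset.sum_add_distrib, Finset.sum_add_distrib, Fintype.sum_ite_eq',
          Fintype.sum_ite_eq'] at h2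
        omega
      rw [hindle] at hs
      omega
    · intro j
      show (if j = i ∨ j = j0 then x' j else x' j - 1) ≤ m - 1
      have h1 : x' j ≤ x j := by
        rw [hx' j]; by_cases hj : j = i
        · simp [hj]
        · rw [if_neg hj]; omega
      have := hlt j
      by_cases h2 : j = i ∨ j = j0
      · rw [if_pos h2]; omega
      · rw [if_neg h2]; omega
    · intro hev; exact absurd hev hEm1
    · intro _
      refine ⟨j0, ?_, ?_⟩
      · show Even (if j0 = i ∨ j0 = j0 then x' j0 else x' j0 - 1)
        rw [if_pos (Or.inr rfl), Nat.even_iff]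
        exact hx'ev j0 hj0i
      · intro j hj
        have hj' : Even (if j = i ∨ j = j0 then x' j else x' j - 1) := hj
        by_contra hne
        by_cases h1 : j = i
        · rw [if_pos (Or.inl h1), h1, hx'i, Nat.even_iff] at hj'
          have h5 := hodd i; rw [Nat.odd_iff] at h5
          omega
        · have h2 : ¬ (j = i ∨ j = j0) := by tauto
          rw [if_neg h2, Nat.even_iff] at hj'
          have h5 := hx'ev j h1
          have h6 := hj0pos j h1 hne
          omega
    · apply pre_of_le
      intro j
      show (if j = i ∨ j = j0 then x' j else x' j - 1) ≤ x' j
      by_cases h2 : j = i ∨ j = j0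
      · rw [if_pos h2]
      · rw [if_neg h2]; omega
  refine ⟨?_, ?_, hoddm1⟩
  · exact le_antisymm (csSup_le ⟨m - 1, hmemx⟩ hubx) (le_csSup ⟨m - 1, hubx⟩ hmemx)
  · exact le_antisymm (csSup_le ⟨m - 1, hmem'⟩ hub') (le_csSup ⟨m - 1, hub'⟩ hmem')
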